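/- Let r, m, n be positive integers, let q be a nonnegative integer, and suppose 2^{n+q}/r − 1 ≤ m ≤ 2^{n+q}/r + 1. Let r' ≥ 3 be an odd integer and let j be an integer with 1 ≤ j ≤ (r'−1)/2. Then for every integer h, sin²(π·m·r·(j/r' + h)/2^{n+q}) ≥ sin²(π·m·r·(j/r')/2^{n+q}) · (1 − (π·h·r/2^{n+q})²) − 2·π·|h|·r/2^{n+q}. -/

import Mathlib

open Real

theorem stmt_14 (r m n q : ℕ) (hr : 0 < r) (hm : 0 < m) (hn : 0 < n)
    (hm1 : (2 : ℝ) ^ (n + q) / r - 1 ≤ m) (hm2 : (m : ℝ) ≤ 2 ^ (n + q) / r + 1)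
    (r' : ℕ) (hr'3 : 3 ≤ r') (hodd : Odd r')
    (j : ℕ) (hj1 : 1 ≤ j) (hj2 : j ≤ (r' - 1) / 2) (h : ℤ) :
    Real.sin (π * m * r * ((j : ℝ) / r' + h) / 2 ^ (n + q)) ^ 2 ≥
      Real.sin (π * m * r * ((j : ℝ) / r') / 2 ^ (n + q)) ^ 2 *
          (1 - (π * h * r / 2 ^ (n + q)) ^ 2)
        - 2 * π * |(h : ℝ)| * r / 2 ^ (n + q) := by
  have hNpos : (0:ℝ) < 2 ^ (n + q) := by positivity
  have hrR : (0:ℝ) < r := by exact_mod_cast hr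
  set N : ℝ := (2:ℝ) ^ (n + q) with hNdef
  set A : ℝ := π * m * r * ((j : ℝ) / r') / N with hA
  set ε : ℝ := π * m * r * h / N - π * h with hε
  set s : ℝ := π * |(h : ℝ)| * r / N with hs
  have hs0 : 0 ≤ s := by
    have := abs_nonneg (h : ℝ)
    positivity
  -- step 1 : rewrite the shifted sine squared
  have harg : π * m * r * ((j : ℝ) / r' + h) / N = (A + ε) + h * π := by
    rw [hA, hε]; ring
  have hsq : Real.sin (π * m * r * ((j : ℝ) / r' + h) / N) ^ 2
      = Real.sin (A + ε) ^ 2 := by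
    rw [harg, Real.sin_add_int_mul_pi, mul_pow]
    rcases Int.even_or_odd h with he | ho
    · rw [he.neg_one_zpow]; ring
    · rw [ho.neg_one_zpow]; ring
  -- step 2 : |ε| ≤ s
  have hmr1 : N - r ≤ (m : ℝ) * r := by
    have := mul_le_mul_of_nonneg_right hm1 hrR.le
    rw [sub_mul, div_mul_cancel₀ _ hrR.ne', one_mul] at this
    linarith
  have hmr2 : (m : ℝ) * r ≤ N + r := by
    have := mul_le_mul_of_nonneg_right hm2 hrR.le
    rw [add_mul, div_mul_cancel₀ _ hrR.ne', one_mul] at this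
    linarith
  have hεs : |ε| ≤ s := by
    have hεeq : ε = π * h * ((m : ℝ) * r - N) / N := by
      rw [hε]; field_simp
    have habs : |(m : ℝ) * r - N| ≤ r := abs_le.mpr ⟨by linarith, by linarith⟩
    rw [hεeq, hs, abs_div, abs_of_pos hNpos, abs_mul, abs_mul, abs_of_pos pi_pos]
    gcongr
  -- step 3 : Lipschitz estimate
  have hid : Real.sin (A + ε) ^ 2 - Real.sin A ^ 2
      = Real.sin (A + (A + ε)) * Real.sin ε := by
    rw [Real.sin_add A ε, Real.sin_add A (A + ε), Real.sin_add A ε, Real.cos_add A ε]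
    linear_combination (Real.sin A ^ 2) * (Real.sin_sq_add_cos_sq ε)
  have lip : Real.sin A ^ 2 - s ≤ Real.sin (A + ε) ^ 2 := by
    have h1 : |Real.sin (A + ε) ^ 2 - Real.sin A ^ 2| ≤ |ε| := by
      rw [hid, abs_mul]
      calc |Real.sin (A + (A + ε))| * |Real.sin ε| ≤ 1 * |ε| := by
            apply mul_le_mul (Real.abs_sin_le_one _) (Real.abs_sin_le_abs)
              (abs_nonneg _) zero_le_one
        _ = |ε| := one_mul _
    have := (abs_le.mp h1).1
    linarith
  -- step 4 : conclude
  rw [ge_iff_le, hsq]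
  have hsq2 : (π * (h : ℝ) * r / N) ^ 2 = s ^ 2 := by
    rw [hs, div_pow, div_pow, mul_pow, mul_pow, mul_pow, mul_pow, sq_abs]
  rw [hsq2]
  have hsin1 : Real.sin A ^ 2 ≤ 1 := Real.sin_sq_le_one A
  have h2s : 2 * π * |(h : ℝ)| * r / N = 2 * s := by rw [hs]; ring
  rw [h2s]
  nlinarith [mul_nonneg (sq_nonneg (Real.sin A)) (sq_nonneg s), hs0, lip]
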